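/- Define ρ : [0,∞) → ℝ by ρ(x) = 1 for x ∈ [0, π/2) and ρ(x) = (−1)^k for x ∈ [(2k−1)π/2, (2k+1)π/2) for each integer k ≥ 1. Then for every θ > 0: limsup_{x→∞} e^{−θx} | ∫₀ˣ e^{θu} ρ(u) du | = (e^{πθ} − 1) / (θ(1 + e^{πθ})). -/

import Mathlib

open MeasureTheory Filter

section SquareWaveAux
open Real Topology

lemma sq_ae_ne (b : ℝ) : ∀ᵐ u : ℝ, u ≠ b := by
  have : (volume : Measure ℝ) {b} = 0 := Real.volume_singleton
  filter_upwards [compl_mem_ae_iff.mpr this] with u hu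
  simpa using hu

lemma sq_integrable_step {θ c a b : ℝ} (ρ : ℝ → ℝ)
    (hc : ∀ u, a ≤ u → u < b → ρ u = c) (hab : a ≤ b) :
    IntervalIntegrable (fun u => Real.exp (θ * u) * ρ u) volume a b := by
  have hcont : IntervalIntegrable (fun u => Real.exp (θ * u) * c) volume a b :=
    (Continuous.intervalIntegrable (by continuity) a b)
  refine hcont.congr_ae ?_
  rw [Filter.EventuallyEq, ae_restrict_iff' measurableSet_uIoc]
  filter_upwards [sq_ae_ne b] with u hub hu
  rw [Set.uIoc_of_le hab] at hu
  rw [hc u hu.1.le (lt_of_le_of_ne hu.2 hub)]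

lemma sq_integral_step {θ c a b x : ℝ} (hθ : θ ≠ 0) (ρ : ℝ → ℝ)
    (hc : ∀ u, a ≤ u → u < b → ρ u = c) (hax : a ≤ x) (hxb : x ≤ b) :
    ∫ u in a..x, Real.exp (θ * u) * ρ u = c * (Real.exp (θ * x) - Real.exp (θ * a)) / θ := by
  have h1 : ∫ u in a..x, Real.exp (θ * u) * ρ u = ∫ u in a..x, Real.exp (θ * u) * c := by
    apply intervalIntegral.integral_congr_ae
    filter_upwards [sq_ae_ne b] with u hub hu
    rw [Set.uIoc_of_le hax] at hu
    rw [hc u hu.1.le (lt_of_le_of_ne (hu.2.trans hxb) hub)]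
  have h2 : ∫ u in a..x, Real.exp (θ * u) = θ⁻¹ • (Real.exp (θ * x) - Real.exp (θ * a)) := by
    rw [intervalIntegral.integral_comp_mul_left Real.exp hθ, integral_exp]
  rw [h1]
  simp only [intervalIntegral.integral_mul_const, h2, smul_eq_mul]
  field_simp

noncomputable def sqA (k : ℕ) : ℝ := k * Real.pi - Real.pi / 2
noncomputable def sqM (θ : ℝ) : ℝ :=
  (Real.exp (Real.pi * θ) - 1) / (θ * (1 + Real.exp (Real.pi * θ)))
noncomputable def sqC (θ : ℝ) : ℝ :=
  (Real.exp (θ * (Real.pi / 2)) - 1) / θ - sqM θ * Real.exp (θ * (Real.pi / 2))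

lemma sqM_id {θ : ℝ} (hθ : 0 < θ) :
    sqM θ * (θ * (1 + Real.exp (Real.pi * θ))) = Real.exp (Real.pi * θ) - 1 := by
  have h : θ * (1 + Real.exp (Real.pi * θ)) ≠ 0 := by positivity
  rw [sqM, div_mul_cancel₀ _ h]

lemma sqM_nonneg {θ : ℝ} (hθ : 0 < θ) : 0 ≤ sqM θ := by
  have h1 : (1:ℝ) ≤ Real.exp (Real.pi * θ) :=
    Real.one_le_exp (by positivity)
  apply div_nonneg (by linarith) (by positivity)

section
variable {θ : ℝ} (ρ : ℝ → ℝ)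

lemma sq_rho_step (hρk : ∀ k : ℕ, 1 ≤ k → ∀ x : ℝ,
      (2 * (k : ℝ) - 1) * (Real.pi / 2) ≤ x → x < (2 * (k : ℝ) + 1) * (Real.pi / 2) →
      ρ x = (-1 : ℝ) ^ k) (k : ℕ) (hk : 1 ≤ k) :
    ∀ u, sqA k ≤ u → u < sqA (k + 1) → ρ u = (-1 : ℝ) ^ k := by
  intro u h1 h2
  apply hρk k hk u
  · rw [sqA] at h1; nlinarith [h1]
  · rw [sqA] at h2; push_cast at h2; nlinarith [h2]

lemma sqA_le (k : ℕ) : sqA k ≤ sqA (k + 1) := by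
  rw [sqA, sqA]; push_cast; nlinarith [Real.pi_pos]

lemma sq_E (hθ : 0 < θ)
    (hρ0 : ∀ x : ℝ, 0 ≤ x → x < Real.pi / 2 → ρ x = 1)
    (hρk : ∀ k : ℕ, 1 ≤ k → ∀ x : ℝ,
      (2 * (k : ℝ) - 1) * (Real.pi / 2) ≤ x → x < (2 * (k : ℝ) + 1) * (Real.pi / 2) →
      ρ x = (-1 : ℝ) ^ k) :
    ∀ k : ℕ, 1 ≤ k →
      (∫ u in (0:ℝ)..(sqA k), Real.exp (θ * u) * ρ u)
          = (-1 : ℝ) ^ (k + 1) * sqM θ * Real.exp (θ * sqA k) + sqC θ ∧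
      IntervalIntegrable (fun u => Real.exp (θ * u) * ρ u) volume 0 (sqA k) := by
  have hπ := Real.pi_pos
  have hθ' : θ ≠ 0 := ne_of_gt hθ
  have ha1 : sqA 1 = Real.pi / 2 := by rw [sqA]; push_cast; ring
  have h01 : (0:ℝ) ≤ sqA 1 := by rw [ha1]; positivity
  have hc0 : ∀ u, (0:ℝ) ≤ u → u < sqA 1 → ρ u = 1 := by
    intro u hu1 hu2; exact hρ0 u hu1 (ha1 ▸ hu2)
  intro k hk
  induction k, hk using Nat.le_induction with
  | base =>
    constructor
    · rw [sq_integral_step hθ' ρ hc0 h01 le_rfl, sqC, ha1]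
      simp [Real.exp_zero]
    · exact sq_integrable_step ρ hc0 h01
  | succ k hk ih =>
    have hstep := sq_rho_step ρ hρk k hk
    have hint2 : IntervalIntegrable (fun u => Real.exp (θ * u) * ρ u) volume (sqA k) (sqA (k+1)) :=
      sq_integrable_step ρ hstep (sqA_le k)
    have hadd := intervalIntegral.integral_add_adjacent_intervals ih.2 hint2
    have hval : ∫ u in (sqA k)..(sqA (k+1)), Real.exp (θ * u) * ρ u
        = (-1:ℝ)^k * (Real.exp (θ * sqA (k+1)) - Real.exp (θ * sqA k)) / θ :=
      sq_integral_step hθ' ρ hstep (sqA_le k) le_rfl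
    have hexp : Real.exp (θ * sqA (k+1)) = Real.exp (Real.pi * θ) * Real.exp (θ * sqA k) := by
      rw [← Real.exp_add]; congr 1; rw [sqA, sqA]; push_cast; ring
    constructor
    · rw [← hadd, ih.1, hval, hexp]
      have key := sqM_id hθ
      have hpow : ((-1:ℝ))^(k+1+1) = (-1:ℝ)^k := by ring
      have hpow2 : ((-1:ℝ))^(k+1) = -(-1:ℝ)^k := by ring
      rw [hpow, hpow2]
      set P := Real.exp (Real.pi * θ)
      set E := Real.exp (θ * sqA k)
      have h5 : ((-1:ℝ)^k) * (P * E - E) / θ = (-1:ℝ)^k * (sqM θ * (1 + P) * E) := by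
        rw [div_eq_iff hθ']
        linear_combination (-(-1:ℝ)^k * E) * key
      rw [h5]
      ring
    · exact ih.2.trans hint2
end

section
variable {θ : ℝ} (ρ : ℝ → ℝ)

lemma sq_val (hθ : 0 < θ)
    (hρ0 : ∀ x : ℝ, 0 ≤ x → x < Real.pi / 2 → ρ x = 1)
    (hρk : ∀ k : ℕ, 1 ≤ k → ∀ x : ℝ,
      (2 * (k : ℝ) - 1) * (Real.pi / 2) ≤ x → x < (2 * (k : ℝ) + 1) * (Real.pi / 2) →
      ρ x = (-1 : ℝ) ^ k) (k : ℕ) (hk : 1 ≤ k) (x : ℝ)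
    (h1 : sqA k ≤ x) (h2 : x ≤ sqA (k + 1)) :
    ∫ u in (0:ℝ)..x, Real.exp (θ * u) * ρ u
      = (-1:ℝ)^k * (Real.exp (θ * x) - Real.exp (θ * sqA k)) / θ
        + ((-1:ℝ)^(k + 1) * sqM θ * Real.exp (θ * sqA k) + sqC θ) := by
  obtain ⟨hE, hI⟩ := sq_E ρ hθ hρ0 hρk k hk
  have hstep := sq_rho_step ρ hρk k hk
  have hstep' : ∀ u, sqA k ≤ u → u < x → ρ u = (-1:ℝ)^k :=
    fun u hu1 hu2 => hstep u hu1 (lt_of_lt_of_le hu2 h2)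
  have hint2 : IntervalIntegrable (fun u => Real.exp (θ * u) * ρ u) volume (sqA k) x :=
    sq_integrable_step ρ hstep' h1
  have hadd := intervalIntegral.integral_add_adjacent_intervals hI hint2
  have hval : ∫ u in (sqA k)..x, Real.exp (θ * u) * ρ u
      = (-1:ℝ)^k * (Real.exp (θ * x) - Real.exp (θ * sqA k)) / θ :=
    sq_integral_step (ne_of_gt hθ) ρ hstep h1 h2
  rw [← hadd, hE, hval]; ring

lemma sq_abs_bound {θ M t Q : ℝ} (hθ : 0 < θ) (hM : 0 ≤ M)
    (hkeyQ : 1 - Q = θ * M * (1 + Q)) (ht1 : Q ≤ t) (ht2 : t ≤ 1) :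
    |(1 - t)/θ - M * t| ≤ M := by
  have hz : (1 - t)/θ - M * t = ((1 - t) - M * t * θ)/θ := by field_simp
  rw [hz, abs_div, abs_of_pos hθ, div_le_iff₀ hθ]
  rw [abs_le]
  constructor <;>
    nlinarith [mul_nonneg (mul_nonneg hθ.le hM) (sub_nonneg.2 ht1),
      mul_nonneg (mul_nonneg hθ.le hM) (sub_nonneg.2 ht2)]

lemma sq_keyQ (hθ : 0 < θ) :
    1 - Real.exp (-(Real.pi * θ)) = θ * sqM θ * (1 + Real.exp (-(Real.pi * θ))) := by
  have key := sqM_id hθ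
  have hQP : Real.exp (-(Real.pi * θ)) * Real.exp (Real.pi * θ) = 1 := by
    rw [← Real.exp_add]; simp
  linear_combination (-Real.exp (-(Real.pi * θ))) * key
    + (θ * sqM θ - 1) * hQP

lemma sq_upper (hθ : 0 < θ)
    (hρ0 : ∀ x : ℝ, 0 ≤ x → x < Real.pi / 2 → ρ x = 1)
    (hρk : ∀ k : ℕ, 1 ≤ k → ∀ x : ℝ,
      (2 * (k : ℝ) - 1) * (Real.pi / 2) ≤ x → x < (2 * (k : ℝ) + 1) * (Real.pi / 2) →
      ρ x = (-1 : ℝ) ^ k) (x : ℝ) (hx : Real.pi / 2 ≤ x) :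
    Real.exp (-(θ * x)) * |∫ u in (0:ℝ)..x, Real.exp (θ * u) * ρ u|
      ≤ sqM θ + |sqC θ| * Real.exp (-(θ * x)) := by
  have hπ := Real.pi_pos
  have hx0 : (0:ℝ) < x := lt_of_lt_of_le (by positivity) hx
  set k : ℕ := ⌊x / Real.pi + 1/2⌋₊ with hkdef
  have hr1 : (1:ℝ) ≤ x / Real.pi + 1/2 := by
    have h : (1:ℝ)/2 ≤ x / Real.pi := by rw [le_div_iff₀ hπ]; linarith
    linarith
  have hk1 : 1 ≤ k := Nat.le_floor (by exact_mod_cast hr1)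
  have hfl : (k:ℝ) ≤ x / Real.pi + 1/2 := Nat.floor_le (by linarith)
  have hfl2 : x / Real.pi + 1/2 < (k:ℝ) + 1 := Nat.lt_floor_add_one _
  have h1 : sqA k ≤ x := by
    rw [sqA]
    have := (le_div_iff₀ hπ).mp (by linarith : (k:ℝ) - 1/2 ≤ x / Real.pi)
    nlinarith
  have h2 : x ≤ sqA (k + 1) := by
    rw [sqA]
    push_cast
    have := (div_le_iff₀ hπ).mp (by linarith : x / Real.pi ≤ (k:ℝ) + 1/2)
    nlinarith
  rw [sq_val ρ hθ hρ0 hρk k hk1 x h1 h2]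
  set M := sqM θ
  set C := sqC θ
  set w := Real.exp (-(θ * x)) with hw
  set E := Real.exp (θ * sqA k) with hE
  have hwpos : 0 < w := Real.exp_pos _
  have hwX : w * Real.exp (θ * x) = 1 := by rw [hw, ← Real.exp_add]; simp
  have hM : 0 ≤ M := sqM_nonneg hθ
  have htval : w * E = Real.exp (θ * sqA k - θ * x) := by
    rw [hw, hE, ← Real.exp_add]; ring_nf
  have ht2 : w * E ≤ 1 := by
    rw [htval]
    apply Real.exp_le_one_iff.mpr
    nlinarith
  have ht1 : Real.exp (-(Real.pi * θ)) ≤ w * E := by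
    rw [htval]
    apply Real.exp_le_exp.mpr
    have hak : x ≤ sqA k + Real.pi := by
      rw [sqA] at h2 ⊢; push_cast at h2; linarith
    nlinarith
  have hmain : w * ((-1:ℝ)^k * (Real.exp (θ * x) - E) / θ + ((-1:ℝ)^(k+1) * M * E + C))
      = (-1:ℝ)^k * ((1 - w * E)/θ - M * (w * E)) + C * w := by
    have hpow2 : ((-1:ℝ))^(k+1) = -(-1:ℝ)^k := by ring
    rw [hpow2]
    field_simp
    linear_combination ((-1:ℝ)^k) * hwX
  have habs : |(1 - w * E)/θ - M * (w * E)| ≤ M :=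
    sq_abs_bound hθ hM (sq_keyQ hθ) ht1 ht2
  calc w * |(-1:ℝ)^k * (Real.exp (θ * x) - E) / θ + ((-1:ℝ)^(k+1) * M * E + C)|
      = |w * ((-1:ℝ)^k * (Real.exp (θ * x) - E) / θ + ((-1:ℝ)^(k+1) * M * E + C))| := by
        rw [abs_mul, abs_of_pos hwpos]
    _ = |(-1:ℝ)^k * ((1 - w * E)/θ - M * (w * E)) + C * w| := by rw [hmain]
    _ ≤ |(-1:ℝ)^k * ((1 - w * E)/θ - M * (w * E))| + |C * w| := abs_add_le _ _
    _ = |(1 - w * E)/θ - M * (w * E)| + |C| * w := by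
        rw [abs_mul, abs_mul, abs_pow, abs_neg, abs_one, one_pow, one_mul,
          abs_of_pos hwpos]
    _ ≤ M + |C| * w := by
        have := mul_le_mul_of_nonneg_right (le_refl (|C|)) hwpos.le
        linarith [habs]
end

section
variable {θ : ℝ} (ρ : ℝ → ℝ)

lemma sq_lower (hθ : 0 < θ)
    (hρ0 : ∀ x : ℝ, 0 ≤ x → x < Real.pi / 2 → ρ x = 1)
    (hρk : ∀ k : ℕ, 1 ≤ k → ∀ x : ℝ,
      (2 * (k : ℝ) - 1) * (Real.pi / 2) ≤ x → x < (2 * (k : ℝ) + 1) * (Real.pi / 2) →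
      ρ x = (-1 : ℝ) ^ k) (k : ℕ) (hk : 1 ≤ k) :
    sqM θ - |sqC θ| * Real.exp (-(θ * sqA k))
      ≤ Real.exp (-(θ * sqA k)) * |∫ u in (0:ℝ)..(sqA k), Real.exp (θ * u) * ρ u| := by
  rw [(sq_E ρ hθ hρ0 hρk k hk).1]
  set M := sqM θ
  set C := sqC θ
  set w := Real.exp (-(θ * sqA k)) with hw
  set E := Real.exp (θ * sqA k) with hE
  have hwpos : 0 < w := Real.exp_pos _
  have hwE : w * E = 1 := by rw [hw, hE, ← Real.exp_add]; simp
  have hM : 0 ≤ M := sqM_nonneg hθ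
  have h1 : w * |(-1:ℝ)^(k+1) * M * E + C| = |(-1:ℝ)^(k+1) * M + C * w| := by
    rw [← abs_of_pos hwpos, ← abs_mul, abs_of_pos hwpos]
    congr 1
    linear_combination ((-1:ℝ)^(k+1) * M) * hwE
  rw [h1]
  have h2 : M = |(-1:ℝ)^(k+1) * M| := by
    rw [abs_mul, abs_pow, abs_neg, abs_one, one_pow, one_mul, abs_of_nonneg hM]
  have h3 : |(-1:ℝ)^(k+1) * M| ≤ |(-1:ℝ)^(k+1) * M + C * w| + |C * w| := by
    calc |(-1:ℝ)^(k+1) * M| = |((-1:ℝ)^(k+1) * M + C * w) + (-(C * w))| := by congr 1; ring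
    _ ≤ |(-1:ℝ)^(k+1) * M + C * w| + |(-(C * w))| := abs_add_le _ _
    _ = |(-1:ℝ)^(k+1) * M + C * w| + |C * w| := by rw [abs_neg]
  have h4 : |C * w| = |C| * w := by rw [abs_mul, abs_of_pos hwpos]
  linarith [h2, h3, h4]
end

theorem extremal_square_wave_exponential_average'
    (ρ : ℝ → ℝ)
    (hρ0 : ∀ x : ℝ, 0 ≤ x → x < Real.pi / 2 → ρ x = 1)
    (hρk : ∀ k : ℕ, 1 ≤ k → ∀ x : ℝ,
      (2 * (k : ℝ) - 1) * (Real.pi / 2) ≤ x → x < (2 * (k : ℝ) + 1) * (Real.pi / 2) →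
      ρ x = (-1 : ℝ) ^ k) :
    ∀ θ : ℝ, 0 < θ →
      Filter.limsup
        (fun x : ℝ => Real.exp (-(θ * x)) * |∫ u in (0:ℝ)..x, Real.exp (θ * u) * ρ u|)
        atTop
      = (Real.exp (Real.pi * θ) - 1) / (θ * (1 + Real.exp (Real.pi * θ))) := by
  intro θ hθ
  have hπ := Real.pi_pos
  set u : ℝ → ℝ := fun x => Real.exp (-(θ * x)) * |∫ v in (0:ℝ)..x, Real.exp (θ * v) * ρ v|
    with hu
  show limsup u atTop = sqM θ
  set M := sqM θ with hM
  set C := sqC θ with hC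
  have hMnn : 0 ≤ M := sqM_nonneg hθ
  have hupper : ∀ᶠ x in atTop, u x ≤ M + |C| * Real.exp (-(θ * x)) := by
    filter_upwards [eventually_ge_atTop (Real.pi/2)] with x hx
    exact sq_upper ρ hθ hρ0 hρk x hx
  have hunn : ∀ x, 0 ≤ u x := fun x => by positivity
  have hBound : IsBoundedUnder (· ≤ ·) atTop u := by
    refine ⟨M + |C|, ?_⟩
    rw [eventually_map]
    filter_upwards [hupper, eventually_ge_atTop (0:ℝ)] with x h hx0
    have he1 : Real.exp (-(θ * x)) ≤ 1 := Real.exp_le_one_iff.mpr (by nlinarith)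
    nlinarith [abs_nonneg C]
  have hCob : IsCoboundedUnder (· ≤ ·) atTop u :=
    Filter.isCoboundedUnder_le_of_le atTop hunn
  -- exponential error tends to zero along ℝ
  have hexp0 : Tendsto (fun x : ℝ => |C| * Real.exp (-(θ * x))) atTop (𝓝 0) := by
    have h1 : Tendsto (fun x : ℝ => θ * x) atTop atTop :=
      Tendsto.const_mul_atTop hθ tendsto_id
    have h2 : Tendsto (fun x : ℝ => Real.exp (-(θ * x))) atTop (𝓝 0) :=
      Real.tendsto_exp_neg_atTop_nhds_zero.comp h1
    simpa using h2.const_mul |C|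
  have hA : Tendsto sqA atTop atTop := by
    rw [show sqA = fun k : ℕ => (k:ℝ) * Real.pi + (-(Real.pi/2)) from
      funext fun k => by rw [sqA]; ring]
    exact tendsto_atTop_add_const_right _ _
      (tendsto_natCast_atTop_atTop.atTop_mul_const hπ)
  -- limsup ≤ M
  have hle : limsup u atTop ≤ M := by
    refine le_of_forall_pos_le_add fun ε hε => ?_
    refine limsup_le_of_le hCob ?_
    have hev : ∀ᶠ x in atTop, |C| * Real.exp (-(θ * x)) < ε :=
      hexp0.eventually (Filter.Tendsto.eventually_lt_const hε tendsto_id)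
    filter_upwards [hupper, hev] with x h1 h2
    linarith
  -- M ≤ limsup
  have hge : M ≤ limsup u atTop := by
    refine le_of_forall_pos_le_add fun ε hε => ?_
    have hfreq : ∃ᶠ x in atTop, M - ε ≤ u x := by
      rw [frequently_atTop]
      intro b
      have hg0 : Tendsto (fun k : ℕ => |C| * Real.exp (-(θ * sqA k))) atTop (𝓝 0) :=
        hexp0.comp hA
      have hev1 : ∀ᶠ k : ℕ in atTop, |C| * Real.exp (-(θ * sqA k)) < ε :=
        hg0.eventually (Filter.Tendsto.eventually_lt_const hε tendsto_id)
      have hev2 : ∀ᶠ k : ℕ in atTop, b ≤ sqA k := hA.eventually (eventually_ge_atTop b)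
      have hev3 : ∀ᶠ k : ℕ in atTop, 1 ≤ k := eventually_ge_atTop 1
      obtain ⟨k, h1, h2, h3⟩ := (hev1.and (hev2.and hev3)).exists
      refine ⟨sqA k, h2, ?_⟩
      have hlow := sq_lower ρ hθ hρ0 hρk k h3
      rw [hu]
      dsimp only
      linarith [hlow]
    have := le_limsup_of_frequently_le hfreq hBound
    linarith
  linarith

end SquareWaveAux


/-- **The computation from the Remark after Theorem 4.2 of the paper**: for
the square-wave `ρ = τ'` attached to the extremal zig-zag example, for every
`θ > 0`,
`limsup_{x→∞} e^{−θx} |∫₀ˣ e^{θu} ρ(u) du| = (e^{πθ} − 1)/(θ(1 + e^{πθ}))`. -/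
theorem extremal_square_wave_exponential_average
    (ρ : ℝ → ℝ)
    (hρ0 : ∀ x : ℝ, 0 ≤ x → x < Real.pi / 2 → ρ x = 1)
    (hρk : ∀ k : ℕ, 1 ≤ k → ∀ x : ℝ,
      (2 * (k : ℝ) - 1) * (Real.pi / 2) ≤ x → x < (2 * (k : ℝ) + 1) * (Real.pi / 2) →
      ρ x = (-1 : ℝ) ^ k) :
    ∀ θ : ℝ, 0 < θ →
      Filter.limsup
        (fun x : ℝ => Real.exp (-(θ * x)) * |∫ u in (0:ℝ)..x, Real.exp (θ * u) * ρ u|)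
        atTop
      = (Real.exp (Real.pi * θ) - 1) / (θ * (1 + Real.exp (Real.pi * θ))) := by
  exact extremal_square_wave_exponential_average' ρ hρ0 hρk
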